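/- Wall-crossing decomposition. Let 𝔄 = [α₁,…,αₙ] be a polarized list of nonzero vectors spanning ℝʳ, let c be a chamber of 𝔄, and let τ ⊆ {1,…,n} be such that (αⱼ)_{j∈τ} is a basis of ℝʳ with c ⊆ Cone(αⱼ : j ∈ τ). Then for every ρ ⊆ {1,…,n} such that (αⱼ)_{j∈ρ} is a basis of ℝʳ, the fraction Φ_ρ lies in the ℝ-linear span, inside Frac(ℝ[x₁,…,x_r]), of Φ_τ together with the fractions Φ_σ over all σ ⊆ {1,…,n} such that (αⱼ)_{j∈σ} is a basis of ℝʳ and c is not contained in Cone(αⱼ : j ∈ σ). -/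

import Mathlib

open MvPolynomial

noncomputable section

/-- The standard inner product on `ℝʳ`. -/
def dotp {r : ℕ} (v w : Fin r → ℝ) : ℝ := ∑ i, v i * w i

/-- The linear polynomial `v₁x₁ + … + v_r x_r` associated to a vector `v ∈ ℝʳ`. -/
def linPoly {r : ℕ} (v : Fin r → ℝ) : MvPolynomial (Fin r) ℝ := ∑ i, C (v i) * X i

/-- The fraction field of `ℝ[x₁,…,x_r]`. -/
abbrev Frac (r : ℕ) := FractionRing (MvPolynomial (Fin r) ℝ)

/-- The canonical embedding of `ℝ[x₁,…,x_r]` into its fraction field. -/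
def emb {r : ℕ} (p : MvPolynomial (Fin r) ℝ) : Frac r := algebraMap _ _ p

/-- A real constant viewed inside the fraction field `Frac r`. -/
def cst {r : ℕ} (a : ℝ) : Frac r := emb (C a)

/-- `v` lies in the cone generated by the vectors `α i`, `i ∈ s`. -/
def InCone {r n : ℕ} (α : Fin n → Fin r → ℝ) (s : Finset (Fin n)) (v : Fin r → ℝ) : Prop :=
  ∃ c : Fin n → ℝ, (∀ i ∈ s, 0 ≤ c i) ∧ v = ∑ i ∈ s, c i • α i

/-- The cone generated by the vectors `α i`, `i ∈ s`, as a set. -/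
def coneSet {r n : ℕ} (α : Fin n → Fin r → ℝ) (s : Finset (Fin n)) : Set (Fin r → ℝ) :=
  {v | InCone α s v}

/-- The list `α` is polarized: some `ξ` pairs strictly positively with every `α i`. -/
def Polarized {r n : ℕ} (α : Fin n → Fin r → ℝ) : Prop :=
  ∃ ξ : Fin r → ℝ, ∀ i, 0 < dotp (α i) ξ

/-- `ε` is regular with respect to the list `α`: it lies in no proper subspace spanned by a
subset of the list. -/
def RegularWrt {r n : ℕ} (α : Fin n → Fin r → ℝ) (ε : Fin r → ℝ) : Prop :=
  ∀ s : Set (Fin n), Submodule.span ℝ (α '' s) ≠ ⊤ → ε ∉ Submodule.span ℝ (α '' s)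

/-- A set of indices is generating if the corresponding vectors span `ℝʳ`. -/
def Generating {r n : ℕ} (α : Fin n → Fin r → ℝ) (J : Set (Fin n)) : Prop :=
  Submodule.span ℝ (α '' J) = ⊤

/-- The fraction `P / ∏ᵢ αᵢ^{mᵢ}` in the fraction field. -/
def fracOf {r n : ℕ} (α : Fin n → Fin r → ℝ) (P : MvPolynomial (Fin r) ℝ) (m : Fin n → ℕ) :
    Frac r :=
  emb P / ∏ i, emb (linPoly (α i)) ^ m i

/-- `R_𝔄`: the span of all fractions `P / ∏ᵢ αᵢ^{mᵢ}`. -/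
def Rspace {r n : ℕ} (α : Fin n → Fin r → ℝ) : Submodule ℝ (Frac r) :=
  Submodule.span ℝ {x | ∃ P m, x = fracOf α P m}

/-- `G_𝔄`: the span of the fractions `1 / ∏ᵢ αᵢ^{mᵢ}` with generating support. -/
def Gspace {r n : ℕ} (α : Fin n → Fin r → ℝ) : Submodule ℝ (Frac r) :=
  Submodule.span ℝ {x | ∃ m : Fin n → ℕ, Generating α {i | 0 < m i} ∧ x = fracOf α 1 m}

/-- `NG_𝔄`: the span of the fractions `P / ∏ᵢ αᵢ^{mᵢ}` with non-generating support. -/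
def NGspace {r n : ℕ} (α : Fin n → Fin r → ℝ) : Submodule ℝ (Frac r) :=
  Submodule.span ℝ {x | ∃ P m, ¬ Generating α {i | 0 < m i} ∧ x = fracOf α P m}

/-- `Φ_σ = 1 / ∏_{j ∈ σ} αⱼ`. -/
def Phi {r n : ℕ} (α : Fin n → Fin r → ℝ) (σ : Finset (Fin n)) : Frac r :=
  (∏ j ∈ σ, emb (linPoly (α j)))⁻¹

/-- `(αⱼ)_{j ∈ σ}` is a basis of `ℝʳ`. -/
def IsConeBasis {r n : ℕ} (α : Fin n → Fin r → ℝ) (σ : Finset (Fin n)) : Prop :=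
  LinearIndependent ℝ (fun j : {x // x ∈ σ} => α j.1) ∧
    Submodule.span ℝ (α '' ↑σ) = ⊤

/-- The Gram determinant `det[⟨αⱼ, α_k⟩]_{j,k ∈ σ}`. -/
def gram {r n : ℕ} (α : Fin n → Fin r → ℝ) (σ : Finset (Fin n)) : ℝ :=
  Matrix.det (Matrix.of fun j k : {x // x ∈ σ} => dotp (α j.1) (α k.1))

/-- A Jeffrey–Kirwan functional for `(𝔄, ε)`. -/
def IsJKFunctional {r n : ℕ} (α : Fin n → Fin r → ℝ) (ε : Fin r → ℝ)
    (lam : Frac r →ₗ[ℝ] ℝ) : Prop :=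
  (∀ x ∈ NGspace α, lam x = 0) ∧
  (∀ m : Fin n → ℕ, Generating α {i | 0 < m i} → (∑ i, m i) ≠ r →
    lam (fracOf α 1 m) = 0) ∧
  (∀ σ : Finset (Fin n), IsConeBasis α σ →
    (InCone α σ ε → lam (Phi α σ) = 1 / Real.sqrt (gram α σ)) ∧
    (¬ InCone α σ ε → lam (Phi α σ) = 0))

/-- The ideal `I_{𝔄,ε}` generated by the products `∏_{j∈J} αⱼ` over all `J` such that
`ε ∉ Cone(αᵢ : i ∉ J)`. -/
def JKIdeal {r n : ℕ} (α : Fin n → Fin r → ℝ) (ε : Fin r → ℝ) :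
    Ideal (MvPolynomial (Fin r) ℝ) :=
  Ideal.span {g | ∃ J : Finset (Fin n), ¬ InCone α Jᶜ ε ∧ g = ∏ j ∈ J, linPoly (α j)}

/-- `H` is a hyperplane of `ℝʳ` spanned by a subset of the list `α`. -/
def IsHyperplaneOf {r n : ℕ} (α : Fin n → Fin r → ℝ) (H : Submodule ℝ (Fin r → ℝ)) : Prop :=
  (∃ s : Set (Fin n), H = Submodule.span ℝ (α '' s)) ∧ Module.finrank ℝ H = r - 1

/-- `Cone(𝔄)` minus the union of the hyperplanes spanned by subsets of `𝔄`. -/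
def chamberComplement {r n : ℕ} (α : Fin n → Fin r → ℝ) : Set (Fin r → ℝ) :=
  coneSet α Finset.univ \ ⋃ H ∈ {H | IsHyperplaneOf α H}, (H : Set (Fin r → ℝ))

/-- A chamber of `𝔄`: a connected component of `Cone(𝔄) ∖ ⋃_{H ∈ ℋ(𝔄)} H`. -/
def IsChamber {r n : ℕ} (α : Fin n → Fin r → ℝ) (c : Set (Fin r → ℝ)) : Prop :=
  ∃ x ∈ chamberComplement α, c = connectedComponentIn (chamberComplement α) x
section WCHelpers

variable {r n : ℕ}

/-- `linPoly` as a linear map. -/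
def linPolyL : (Fin r → ℝ) →ₗ[ℝ] MvPolynomial (Fin r) ℝ where
  toFun v := linPoly v
  map_add' v w := by
    simp [linPoly, map_add, add_mul, Finset.sum_add_distrib]
  map_smul' a v := by
    simp [linPoly, Finset.smul_sum, MvPolynomial.smul_eq_C_mul, map_mul, mul_assoc]

lemma linPoly_ne_zero {v : Fin r → ℝ} (hv : v ≠ 0) : linPoly v ≠ 0 := by
  intro h
  have h2 : MvPolynomial.eval v (linPoly v) = 0 := by rw [h]; simp
  rw [linPoly] at h2
  simp only [map_sum, map_mul, MvPolynomial.eval_C, MvPolynomial.eval_X] at h2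
  apply hv
  funext i
  have := (Finset.sum_eq_zero_iff_of_nonneg
    (fun i _ => mul_self_nonneg (v i))).mp h2 i (Finset.mem_univ i)
  exact mul_self_eq_zero.mp this

/-- `emb` as an `ℝ`-linear map. -/
def embL : MvPolynomial (Fin r) ℝ →ₗ[ℝ] Frac r :=
  (IsScalarTower.toAlgHom ℝ (MvPolynomial (Fin r) ℝ) (Frac r)).toLinearMap

lemma emb_eq_embL (p : MvPolynomial (Fin r) ℝ) : emb p = embL p := rfl

lemma emb_linPoly_ne_zero (α : Fin n → Fin r → ℝ) (hα : ∀ i, α i ≠ 0) (i : Fin n) :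
    emb (linPoly (α i)) ≠ 0 := by
  intro h
  exact linPoly_ne_zero (hα i)
    ((map_eq_zero_iff _ (IsFractionRing.injective (MvPolynomial (Fin r) ℝ) (Frac r))).mp h)

lemma emb_linPoly_sum (α : Fin n → Fin r → ℝ) (s : Finset (Fin n)) (u : Fin n → ℝ) :
    emb (linPoly (∑ j ∈ s, u j • α j)) = ∑ j ∈ s, u j • emb (linPoly (α j)) := by
  have h0 : ∀ w : Fin r → ℝ, emb (linPoly w) = (embL ∘ₗ linPolyL) w := fun w => rfl
  rw [h0, map_sum]
  exact Finset.sum_congr rfl fun j _ => by rw [map_smul]; rfl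

/-- The exchange identity for the `Phi` fractions. -/
lemma phi_exchange (α : Fin n → Fin r → ℝ) (hα : ∀ i, α i ≠ 0) {σ : Finset (Fin n)}
    {k : Fin n} (hk : k ∉ σ) (u : Fin n → ℝ) (hu : α k = ∑ j ∈ σ, u j • α j) :
    Phi α σ = ∑ j ∈ σ, u j • Phi α (insert k (σ.erase j)) := by
  set D : Fin n → Frac r := fun i => emb (linPoly (α i)) with hD
  have hDne : ∀ i, D i ≠ 0 := emb_linPoly_ne_zero α hα
  have hDk : D k = ∑ j ∈ σ, u j • D j := by
    rw [hD]; simp only []; rw [hu]; exact emb_linPoly_sum α σ u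
  have key : ∀ j ∈ σ, Phi α (insert k (σ.erase j)) = (D k)⁻¹ * (D j * Phi α σ) := by
    intro j hj
    have hkE : k ∉ σ.erase j := fun h => hk (Finset.mem_of_mem_erase h)
    unfold Phi
    rw [Finset.prod_insert hkE, mul_inv]
    congr 1
    rw [← Finset.mul_prod_erase σ _ hj, mul_inv, ← mul_assoc,
      mul_inv_cancel₀ (hDne j), one_mul]
  calc Phi α σ = (D k)⁻¹ * ((∑ j ∈ σ, u j • D j) * Phi α σ) := by
        rw [← hDk, ← mul_assoc, inv_mul_cancel₀ (hDne k), one_mul]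
    _ = ∑ j ∈ σ, u j • Phi α (insert k (σ.erase j)) := by
        rw [Finset.sum_mul, Finset.mul_sum]
        refine (Finset.sum_congr rfl fun j hj => ?_).symm
        rw [key j hj, smul_mul_assoc, mul_smul_comm]

end WCHelpers
section WCCoef

variable {r n : ℕ} (α : Fin n → Fin r → ℝ)

lemma range_coe_eq_image {σ : Finset (Fin n)} :
    Set.range (fun j : {x // x ∈ σ} => α j.1) = α '' ↑σ := by
  ext y; simp

/-- The basis of `ℝʳ` attached to a cone basis. -/
def bOf {σ : Finset (Fin n)} (h : IsConeBasis α σ) : Module.Basis {x // x ∈ σ} ℝ (Fin r → ℝ) :=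
  Module.Basis.mk h.1 (by rw [range_coe_eq_image α, h.2])

lemma bOf_apply {σ : Finset (Fin n)} (h : IsConeBasis α σ) (j : {x // x ∈ σ}) :
    bOf α h j = α j.1 := Module.Basis.mk_apply _ _ _

/-- The coordinates of `v` with respect to a cone basis, as a function on all indices. -/
def coefb {σ : Finset (Fin n)} (h : IsConeBasis α σ) (v : Fin r → ℝ) (i : Fin n) : ℝ :=
  if hi : i ∈ σ then (bOf α h).repr v ⟨i, hi⟩ else 0

lemma coefb_sum {σ : Finset (Fin n)} (h : IsConeBasis α σ) {ι : Type*} (s : Finset ι)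
    (f : ι → Fin r → ℝ) (i : Fin n) :
    coefb α h (∑ x ∈ s, f x) i = ∑ x ∈ s, coefb α h (f x) i := by
  unfold coefb
  split
  · rw [map_sum]; rw [Finsupp.finset_sum_apply]
  · simp

lemma coefb_smul {σ : Finset (Fin n)} (h : IsConeBasis α σ) (a : ℝ) (v : Fin r → ℝ)
    (i : Fin n) : coefb α h (a • v) i = a * coefb α h v i := by
  unfold coefb
  split
  · rw [map_smul]; rfl
  · simp

lemma coefb_self {σ : Finset (Fin n)} (h : IsConeBasis α σ) {i i' : Fin n}
    (hi : i ∈ σ) (hi' : i' ∈ σ) :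
    coefb α h (α i) i' = if i = i' then 1 else 0 := by
  unfold coefb
  rw [dif_pos hi']
  rw [show α i = bOf α h ⟨i, hi⟩ from (bOf_apply α h ⟨i, hi⟩).symm, Module.Basis.repr_self]
  rw [Finsupp.single_apply]
  simp [Subtype.ext_iff]

lemma coefb_unique {σ : Finset (Fin n)} (h : IsConeBasis α σ) (c : Fin n → ℝ)
    {v : Fin r → ℝ} (hv : v = ∑ i ∈ σ, c i • α i) {i : Fin n} (hi : i ∈ σ) :
    coefb α h v i = c i := by
  subst hv
  rw [coefb_sum]
  rw [Finset.sum_congr rfl (fun i' hi' => by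
    rw [coefb_smul, coefb_self α h hi' hi, mul_ite, mul_one, mul_zero])]
  rw [Finset.sum_ite_eq' σ i c, if_pos hi]

lemma coefb_repr {σ : Finset (Fin n)} (h : IsConeBasis α σ) (v : Fin r → ℝ) :
    v = ∑ i ∈ σ, coefb α h v i • α i := by
  have h1 := (bOf α h).sum_repr v
  rw [Finset.univ_eq_attach] at h1
  conv_lhs => rw [← h1]
  rw [← Finset.sum_attach σ (fun i => coefb α h v i • α i)]
  refine Finset.sum_congr rfl fun j _ => ?_
  rw [bOf_apply]
  congr 1
  unfold coefb
  rw [dif_pos j.2]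

lemma card_of_isConeBasis {σ : Finset (Fin n)} (h : IsConeBasis α σ) : σ.card = r := by
  have h1 := Module.finrank_eq_card_basis (bOf α h)
  rw [Module.finrank_fin_fun, Fintype.card_coe] at h1
  exact h1.symm

/-- Exchange lemma: replacing `j` by `k` in a cone basis. -/
lemma isConeBasis_exchange {σ : Finset (Fin n)} (h : IsConeBasis α σ) {k : Fin n}
    (hk : k ∉ σ) {j : Fin n} (hj : j ∈ σ) (hu : coefb α h (α k) j ≠ 0) :
    IsConeBasis α (insert k (σ.erase j)) := by
  set σ' := insert k (σ.erase j) with hσ'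
  have hkE : k ∉ σ.erase j := fun hh => hk (Finset.mem_of_mem_erase hh)
  have hcard : σ'.card = r := by
    rw [hσ', Finset.card_insert_of_notMem hkE, Finset.card_erase_of_mem hj,
      card_of_isConeBasis α h]
    have : 1 ≤ r := by
      rw [← card_of_isConeBasis α h]
      exact Finset.card_pos.mpr ⟨j, hj⟩
    omega
  have hsub : ∀ i ∈ σ.erase j, α i ∈ Submodule.span ℝ (α '' ↑σ') := by
    intro i hi
    obtain ⟨hij, hiσ⟩ := Finset.mem_erase.mp hi
    exact Submodule.subset_span ⟨i, by simp [hσ', hij, hiσ], rfl⟩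
  have hαk : α k ∈ Submodule.span ℝ (α '' ↑σ') :=
    Submodule.subset_span ⟨k, by simp [hσ'], rfl⟩
  have hαj : α j ∈ Submodule.span ℝ (α '' ↑σ') := by
    set u := coefb α h (α k)
    have hrepr : α k = u j • α j + ∑ i ∈ σ.erase j, u i • α i :=
      (coefb_repr α h (α k)).trans
        (Finset.add_sum_erase σ (fun i => u i • α i) hj).symm
    have h2 : u j • α j = α k - ∑ i ∈ σ.erase j, u i • α i := by
      rw [hrepr]; abel
    have h3 : u j • α j ∈ Submodule.span ℝ (α '' ↑σ') := by
      rw [h2]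
      exact Submodule.sub_mem _ hαk (Submodule.sum_mem _ fun i hi =>
        Submodule.smul_mem _ _ (hsub i hi))
    have := Submodule.smul_mem _ (u j)⁻¹ h3
    rwa [smul_smul, inv_mul_cancel₀ hu, one_smul] at this
  have hspan' : Submodule.span ℝ (α '' ↑σ') = ⊤ := by
    rw [← top_le_iff, ← h.2]
    rw [Submodule.span_le]
    rintro y ⟨i, hi, rfl⟩
    rcases eq_or_ne i j with rfl | hij
    · exact hαj
    · exact hsub i (Finset.mem_erase.mpr ⟨hij, hi⟩)
  refine ⟨?_, hspan'⟩
  apply linearIndependent_of_top_le_span_of_card_eq_finrank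
  · rw [range_coe_eq_image α, hspan']
  · rw [Fintype.card_coe, hcard, Module.finrank_fin_fun]

end WCCoef
section WCReg

variable {r n : ℕ} (α : Fin n → Fin r → ℝ)

lemma isHyperplane_erase {σ : Finset (Fin n)} (h : IsConeBasis α σ) {j : Fin n}
    (hj : j ∈ σ) (hr : 0 < r) :
    IsHyperplaneOf α (Submodule.span ℝ (α '' ↑(σ.erase j))) := by
  refine ⟨⟨↑(σ.erase j), rfl⟩, ?_⟩
  have hinj : Function.Injective
      (fun i : {x // x ∈ σ.erase j} => (⟨i.1, Finset.mem_of_mem_erase i.2⟩ : {x // x ∈ σ})) := by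
    intro a b hab
    rwa [Subtype.mk.injEq, ← Subtype.ext_iff] at hab
  have hli : LinearIndependent ℝ (fun i : {x // x ∈ σ.erase j} => α i.1) :=
    h.1.comp _ hinj
  have h1 := finrank_span_eq_card hli
  rw [range_coe_eq_image α] at h1
  rw [h1, Fintype.card_coe, Finset.card_erase_of_mem hj, card_of_isConeBasis α h]

lemma coefb_x_ne_zero {σ : Finset (Fin n)} (h : IsConeBasis α σ) {x : Fin r → ℝ}
    (hx : x ∈ chamberComplement α) (hr : 0 < r) {i : Fin n} (hi : i ∈ σ) :
    coefb α h x i ≠ 0 := by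
  intro h0
  have hxspan : x ∈ Submodule.span ℝ (α '' ↑(σ.erase i)) := by
    have hrepr := coefb_repr α h x
    rw [← Finset.add_sum_erase σ _ hi, h0, zero_smul, zero_add] at hrepr
    rw [hrepr]
    exact Submodule.sum_mem _ fun i' hi' =>
      Submodule.smul_mem _ _ (Submodule.subset_span ⟨i', hi', rfl⟩)
  have hH := isHyperplane_erase α h hi hr
  exact hx.2 (Set.mem_biUnion hH hxspan)

lemma not_inCone_of_neg_coefb {σ : Finset (Fin n)} (h : IsConeBasis α σ) {x : Fin r → ℝ}
    {i : Fin n} (hi : i ∈ σ) (hneg : coefb α h x i < 0) : x ∉ coneSet α σ := by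
  rintro ⟨cc, hnn, heq⟩
  have := coefb_unique α h cc heq hi
  linarith [hnn i hi]

end WCReg
section WCPivot

variable {r n : ℕ} (α : Fin n → Fin r → ℝ)

lemma pivot_repr_aux {M : Type*} [AddCommGroup M] [Module ℝ M] (s : Finset (Fin n))
    {j : Fin n} (hj : j ∈ s) (t u : Fin n → ℝ) (w : Fin n → M) (x ak : M)
    (hx : x = ∑ i ∈ s, t i • w i) (hak : ak = ∑ i ∈ s, u i • w i) (hu : u j ≠ 0) :
    x = (t j / u j) • ak + ∑ i ∈ s.erase j, (t i - u i * (t j / u j)) • w i := by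
  have h1 : ak = u j • w j + ∑ i ∈ s.erase j, u i • w i :=
    hak.trans (Finset.add_sum_erase s (fun i => u i • w i) hj).symm
  have h2 : x = t j • w j + ∑ i ∈ s.erase j, t i • w i :=
    hx.trans (Finset.add_sum_erase s (fun i => t i • w i) hj).symm
  rw [h1, h2, smul_add, smul_smul, div_mul_cancel₀ _ hu, add_assoc]
  congr 1
  rw [Finset.smul_sum, ← Finset.sum_add_distrib]
  refine Finset.sum_congr rfl fun i hi => ?_
  rw [smul_smul, ← add_smul,
    show t j / u j * u i + (t i - u i * (t j / u j)) = t i by ring]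

lemma pivot_coefb {ρ : Finset (Fin n)} (hρ : IsConeBasis α ρ) {k j : Fin n}
    (hk : k ∉ ρ) (hj : j ∈ ρ) (x : Fin r → ℝ) (hu : coefb α hρ (α k) j ≠ 0) :
    x = ∑ i ∈ insert k (ρ.erase j),
      (if i = k then coefb α hρ x j / coefb α hρ (α k) j
        else coefb α hρ x i -
          coefb α hρ (α k) i * (coefb α hρ x j / coefb α hρ (α k) j)) • α i := by
  have hkE : k ∉ ρ.erase j := fun h => hk (Finset.mem_of_mem_erase h)
  rw [Finset.sum_insert hkE, if_pos rfl]
  rw [Finset.sum_congr rfl (fun i hi => by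
    rw [if_neg (show i ≠ k from fun h => hk (h ▸ Finset.mem_of_mem_erase hi))])]
  exact pivot_repr_aux ρ hj (coefb α hρ x) (coefb α hρ (α k)) α x (α k)
    (coefb_repr α hρ x) (coefb_repr α hρ (α k)) hu

end WCPivot
section WCMain

variable {r n : ℕ} (α : Fin n → Fin r → ℝ) (c : Set (Fin r → ℝ)) (τ : Finset (Fin n))
  (x0 : Fin r → ℝ)

def wcSet : Set (Frac r) :=
  {Phi α τ} ∪ {x | ∃ σ : Finset (Fin n), IsConeBasis α σ ∧ ¬ c ⊆ coneSet α σ ∧ x = Phi α σ}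

lemma junk_mem (hx0 : x0 ∈ c) {σ : Finset (Fin n)} (hσ : IsConeBasis α σ)
    (h : ∃ i ∈ σ, coefb α hσ x0 i < 0) :
    Phi α σ ∈ Submodule.span ℝ (wcSet α c τ) := by
  obtain ⟨i, hi, hneg⟩ := h
  exact Submodule.subset_span (Set.mem_union_right _
    ⟨σ, hσ, fun hsub => not_inCone_of_neg_coefb α hσ hi hneg (hsub hx0), rfl⟩)

open Classical in
noncomputable def fMeas : Finset (Fin n) → ℝ := fun σ =>
  if hσ : IsConeBasis α σ then ∑ j ∈ σ \ τ, coefb α hσ x0 j else 0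

lemma fMeas_eq {σ : Finset (Fin n)} (hσ : IsConeBasis α σ) :
    fMeas α τ x0 σ = ∑ j ∈ σ \ τ, coefb α hσ x0 j := by
  unfold fMeas
  rw [dif_pos hσ]

def allPos (σ : Finset (Fin n)) : Prop :=
  ∃ hσ : IsConeBasis α σ, ∀ i ∈ σ, 0 < coefb α hσ x0 i

noncomputable def nMeas (ρ0 : Finset (Fin n)) : ℕ :=
  (@Finset.filter _ (fun σ => allPos α x0 σ ∧ fMeas α τ x0 σ < fMeas α τ x0 ρ0)
    (Classical.decPred _) Finset.univ).card

lemma nMeas_lt {ρ' ρ0 : Finset (Fin n)} (h1 : allPos α x0 ρ')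
    (h2 : fMeas α τ x0 ρ' < fMeas α τ x0 ρ0) : nMeas α τ x0 ρ' < nMeas α τ x0 ρ0 := by
  unfold nMeas
  apply Finset.card_lt_card
  have hmem : ∀ (b : Finset (Fin n)) (σ : Finset (Fin n)),
      σ ∈ (@Finset.filter _ (fun σ => allPos α x0 σ ∧ fMeas α τ x0 σ < fMeas α τ x0 b)
        (Classical.decPred _) Finset.univ) ↔
      (allPos α x0 σ ∧ fMeas α τ x0 σ < fMeas α τ x0 b) := by
    intro b σ
    letI := Classical.decPred (fun σ => allPos α x0 σ ∧ fMeas α τ x0 σ < fMeas α τ x0 b)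
    rw [Finset.mem_filter]
    simp only [Finset.mem_univ, true_and]
  refine (Finset.ssubset_iff_of_subset ?_).mpr ?_
  · intro σ hσ
    have h := (hmem ρ' σ).mp hσ
    exact (hmem ρ0 σ).mpr ⟨h.1, lt_trans h.2 h2⟩
  · exact ⟨ρ', (hmem ρ0 ρ').mpr ⟨h1, h2⟩,
      fun hcon => absurd ((hmem ρ' ρ').mp hcon).2 (lt_irrefl _)⟩

lemma wc_key (hα : ∀ i, α i ≠ 0) (hr : 0 < r) (hτ : IsConeBasis α τ)
    (hx0cc : x0 ∈ chamberComplement α) (hx0c : x0 ∈ c) (hx0τ : InCone α τ x0)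
    {ρ0 : Finset (Fin n)} (hρ0 : IsConeBasis α ρ0) (hneq : ρ0 ≠ τ)
    (hposall : ∀ i ∈ ρ0, 0 < coefb α hρ0 x0 i) :
    ∃ ρ', allPos α x0 ρ' ∧ fMeas α τ x0 ρ' < fMeas α τ x0 ρ0 ∧
      (Phi α ρ' ∈ Submodule.span ℝ (wcSet α c τ) →
        Phi α ρ0 ∈ Submodule.span ℝ (wcSet α c τ)) := by
  classical
  -- ρ0 \ τ is nonempty
  have hcards : ρ0.card = τ.card := by
    rw [card_of_isConeBasis α hρ0, card_of_isConeBasis α hτ]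
  have hsdne : (ρ0 \ τ).Nonempty := by
    rw [Finset.sdiff_nonempty]
    intro hsub
    exact hneq (Finset.eq_of_subset_of_card_le hsub (le_of_eq hcards.symm))
  -- nonnegativity of the coefficients of x0 in τ
  obtain ⟨s0, hs0nn, hs0eq⟩ := hx0τ
  have hsnn : ∀ i ∈ τ, 0 ≤ coefb α hτ x0 i := fun i hi =>
    (coefb_unique α hτ s0 hs0eq hi) ▸ hs0nn i hi
  -- existence of an entering index k
  have hk : ∃ k, k ∉ ρ0 ∧
      (if k ∈ τ then (0:ℝ) else 1) < ∑ j ∈ ρ0 \ τ, coefb α hρ0 (α k) j := by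
    by_contra hcon
    push_neg at hcon
    have hge : ∀ k ∈ τ, ∑ j ∈ ρ0 \ τ, coefb α hρ0 (α k) j ≤ 0 := by
      intro k hkτ
      by_cases hkρ : k ∈ ρ0
      · have hzero : ∀ j ∈ ρ0 \ τ, coefb α hρ0 (α k) j = 0 := by
          intro j hj
          rw [coefb_self α hρ0 hkρ (Finset.mem_sdiff.mp hj).1, if_neg]
          intro h
          exact (Finset.mem_sdiff.mp hj).2 (h ▸ hkτ)
        rw [Finset.sum_congr rfl hzero, Finset.sum_const_zero]
      · have := hcon k hkρ
        rwa [if_pos hkτ] at this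
    have hA : ∑ k ∈ τ, coefb α hτ x0 k * ∑ j ∈ ρ0 \ τ, coefb α hρ0 (α k) j ≤ 0 := by
      apply Finset.sum_nonpos
      intro k hkτ
      have h1 := hsnn k hkτ
      have h2 := hge k hkτ
      nlinarith
    have hswap : ∑ k ∈ τ, coefb α hτ x0 k * ∑ j ∈ ρ0 \ τ, coefb α hρ0 (α k) j
        = ∑ j ∈ ρ0 \ τ, coefb α hρ0 x0 j := by
      rw [Finset.sum_congr rfl (fun k _ => Finset.mul_sum _ _ _), Finset.sum_comm]
      refine Finset.sum_congr rfl fun j hj => ?_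
      rw [Finset.sum_congr rfl (fun k _ => (coefb_smul α hρ0 (coefb α hτ x0 k) (α k) j).symm),
        ← coefb_sum α hρ0 τ (fun k => coefb α hτ x0 k • α k) j]
      congr 1
      exact (coefb_repr α hτ x0).symm
    have hpos : 0 < ∑ j ∈ ρ0 \ τ, coefb α hρ0 x0 j :=
      Finset.sum_pos (fun j hj => hposall j (Finset.mem_sdiff.mp hj).1) hsdne
    rw [hswap] at hA
    linarith
  obtain ⟨k, hkρ0, hrck⟩ := hk
  have hrck0 : 0 < ∑ j ∈ ρ0 \ τ, coefb α hρ0 (α k) j := by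
    refine lt_of_le_of_lt ?_ hrck
    split <;> norm_num
  -- choose the leaving index js by the ratio test
  have hUpex : ∃ j ∈ ρ0, 0 < coefb α hρ0 (α k) j := by
    by_contra hcon
    push_neg at hcon
    have : ∑ j ∈ ρ0 \ τ, coefb α hρ0 (α k) j ≤ 0 :=
      Finset.sum_nonpos fun j hj => hcon j (Finset.mem_sdiff.mp hj).1
    linarith
  have hUpne : (ρ0.filter (fun j => 0 < coefb α hρ0 (α k) j)).Nonempty := by
    obtain ⟨j, hj1, hj2⟩ := hUpex
    exact ⟨j, Finset.mem_filter.mpr ⟨hj1, hj2⟩⟩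
  obtain ⟨js, hjsUp, hjsmin⟩ := Finset.exists_min_image
    (ρ0.filter (fun j => 0 < coefb α hρ0 (α k) j))
    (fun j => coefb α hρ0 x0 j / coefb α hρ0 (α k) j) hUpne
  obtain ⟨hjsρ0, hjspos⟩ := Finset.mem_filter.mp hjsUp
  have hujs : coefb α hρ0 (α k) js ≠ 0 := ne_of_gt hjspos
  have hθpos : 0 < coefb α hρ0 x0 js / coefb α hρ0 (α k) js :=
    div_pos (hposall js hjsρ0) hjspos
  have hujsθ : coefb α hρ0 (α k) js *
      (coefb α hρ0 x0 js / coefb α hρ0 (α k) js) = coefb α hρ0 x0 js := by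
    field_simp
  -- the new basis
  have hbasis' : IsConeBasis α (insert k (ρ0.erase js)) :=
    isConeBasis_exchange α hρ0 hkρ0 hjsρ0 hujs
  have hrep' := pivot_coefb α hρ0 hkρ0 hjsρ0 x0 hujs
  have hkE : k ∉ ρ0.erase js := fun h => hkρ0 (Finset.mem_of_mem_erase h)
  have hck : coefb α hbasis' x0 k
      = coefb α hρ0 x0 js / coefb α hρ0 (α k) js := by
    rw [coefb_unique α hbasis' _ hrep' (Finset.mem_insert_self k _), if_pos rfl]
  have hcE : ∀ i ∈ ρ0.erase js, coefb α hbasis' x0 i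
      = coefb α hρ0 x0 i - coefb α hρ0 (α k) i *
        (coefb α hρ0 x0 js / coefb α hρ0 (α k) js) := by
    intro i hi
    rw [coefb_unique α hbasis' _ hrep' (Finset.mem_insert_of_mem hi),
      if_neg (show i ≠ k from fun h => hkρ0 (h ▸ Finset.mem_of_mem_erase hi))]
  -- the new basis is all-positive
  have hpos' : ∀ i ∈ insert k (ρ0.erase js), 0 < coefb α hbasis' x0 i := by
    intro i hi
    rcases Finset.mem_insert.mp hi with rfl | hiE
    · rw [hck]; exact hθpos
    · rw [hcE i hiE]
      have hiρ0 : i ∈ ρ0 := Finset.mem_of_mem_erase hiE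
      have hne0 : coefb α hbasis' x0 i ≠ 0 :=
        coefb_x_ne_zero α hbasis' hx0cc hr (Finset.mem_insert_of_mem hiE)
      rw [hcE i hiE] at hne0
      rcases le_or_gt (coefb α hρ0 (α k) i) 0 with hui | hui
      · nlinarith [hposall i hiρ0]
      · have hmin := hjsmin i (Finset.mem_filter.mpr ⟨hiρ0, hui⟩)
        have h3 : coefb α hρ0 (α k) i * (coefb α hρ0 x0 js / coefb α hρ0 (α k) js)
            ≤ coefb α hρ0 (α k) i * (coefb α hρ0 x0 i / coefb α hρ0 (α k) i) :=
          mul_le_mul_of_nonneg_left hmin (le_of_lt hui)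
        rw [mul_comm (coefb α hρ0 (α k) i) (coefb α hρ0 x0 i / coefb α hρ0 (α k) i),
          div_mul_cancel₀ _ (ne_of_gt hui)] at h3
        exact lt_of_le_of_ne (sub_nonneg.mpr h3) (Ne.symm hne0)
  -- the measure decreases
  have hfρ0 : fMeas α τ x0 ρ0 = ∑ j ∈ ρ0 \ τ, coefb α hρ0 x0 j := fMeas_eq α τ x0 hρ0
  have hfρ' : fMeas α τ x0 (insert k (ρ0.erase js))
      = ∑ j ∈ (insert k (ρ0.erase js)) \ τ, coefb α hbasis' x0 j := fMeas_eq α τ x0 hbasis'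
  have hgjs : coefb α hρ0 x0 js - coefb α hρ0 (α k) js *
      (coefb α hρ0 x0 js / coefb α hρ0 (α k) js) = 0 := by rw [hujsθ]; ring
  have hsumA : ∑ i ∈ (ρ0 \ τ).erase js, (coefb α hρ0 x0 i - coefb α hρ0 (α k) i *
        (coefb α hρ0 x0 js / coefb α hρ0 (α k) js))
      = ∑ i ∈ ρ0 \ τ, (coefb α hρ0 x0 i - coefb α hρ0 (α k) i *
        (coefb α hρ0 x0 js / coefb α hρ0 (α k) js)) := by
    by_cases hjs : js ∈ ρ0 \ τ
    · conv_rhs => rw [← Finset.add_sum_erase (ρ0 \ τ)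
        (fun i => coefb α hρ0 x0 i - coefb α hρ0 (α k) i *
          (coefb α hρ0 x0 js / coefb α hρ0 (α k) js)) hjs]
      rw [hgjs, zero_add]
    · rw [Finset.erase_eq_of_notMem hjs]
  have hsplit : ∑ i ∈ ρ0 \ τ, (coefb α hρ0 x0 i - coefb α hρ0 (α k) i *
        (coefb α hρ0 x0 js / coefb α hρ0 (α k) js))
      = fMeas α τ x0 ρ0 - (coefb α hρ0 x0 js / coefb α hρ0 (α k) js) *
        ∑ j ∈ ρ0 \ τ, coefb α hρ0 (α k) j := by
    rw [Finset.sum_sub_distrib, hfρ0, ← Finset.sum_mul]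
    ring
  have hsub_erase : ∀ i ∈ (ρ0 \ τ).erase js, i ∈ ρ0.erase js := by
    intro i hi
    obtain ⟨h1, h2⟩ := Finset.mem_erase.mp hi
    exact Finset.mem_erase.mpr ⟨h1, (Finset.mem_sdiff.mp h2).1⟩
  have hAsum : ∑ i ∈ (ρ0 \ τ).erase js, coefb α hbasis' x0 i
      = ∑ i ∈ (ρ0 \ τ).erase js, (coefb α hρ0 x0 i - coefb α hρ0 (α k) i *
        (coefb α hρ0 x0 js / coefb α hρ0 (α k) js)) :=
    Finset.sum_congr rfl fun i hi => hcE i (hsub_erase i hi)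
  have hflt : fMeas α τ x0 (insert k (ρ0.erase js)) < fMeas α τ x0 ρ0 := by
    by_cases hkτ : k ∈ τ
    · have hd : (insert k (ρ0.erase js)) \ τ = (ρ0 \ τ).erase js := by
        ext i
        simp only [Finset.mem_sdiff, Finset.mem_insert, Finset.mem_erase]
        constructor
        · rintro ⟨h1 | h2, h3⟩
          · exact absurd (h1 ▸ hkτ) h3
          · exact ⟨h2.1, h2.2, h3⟩
        · rintro ⟨h1, h2, h3⟩
          exact ⟨Or.inr ⟨h1, h2⟩, h3⟩
      rw [hfρ', hd, hAsum, hsumA, hsplit]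
      rw [if_pos hkτ] at hrck
      nlinarith
    · have hd : (insert k (ρ0.erase js)) \ τ = insert k ((ρ0 \ τ).erase js) := by
        ext i
        simp only [Finset.mem_sdiff, Finset.mem_insert, Finset.mem_erase]
        constructor
        · rintro ⟨h1 | h2, h3⟩
          · exact Or.inl h1
          · exact Or.inr ⟨h2.1, h2.2, h3⟩
        · rintro (rfl | ⟨h1, h2, h3⟩)
          · exact ⟨Or.inl rfl, hkτ⟩
          · exact ⟨Or.inr ⟨h1, h2⟩, h3⟩
      have hkA : k ∉ (ρ0 \ τ).erase js := fun h =>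
        hkρ0 (Finset.mem_sdiff.mp (Finset.mem_of_mem_erase h)).1
      rw [hfρ', hd, Finset.sum_insert hkA, hck, hAsum, hsumA, hsplit]
      rw [if_neg hkτ] at hrck
      nlinarith
  -- the exchange identity and membership implication
  refine ⟨insert k (ρ0.erase js), ⟨hbasis', hpos'⟩, hflt, ?_⟩
  intro hmem
  have hex := phi_exchange α hα hkρ0 (coefb α hρ0 (α k)) (coefb_repr α hρ0 (α k))
  rw [hex]
  apply Submodule.sum_mem
  intro j hj
  by_cases hu0 : coefb α hρ0 (α k) j = 0
  · rw [hu0, zero_smul]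
    exact Submodule.zero_mem _
  rcases eq_or_ne j js with rfl | hjne
  · exact Submodule.smul_mem _ _ hmem
  · have hbj := isConeBasis_exchange α hρ0 hkρ0 hj hu0
    apply Submodule.smul_mem
    apply junk_mem α c τ x0 hx0c hbj
    have hrepj := pivot_coefb α hρ0 hkρ0 hj x0 hu0
    rcases lt_or_gt_of_ne hu0 with hneg | hposj
    · refine ⟨k, Finset.mem_insert_self _ _, ?_⟩
      rw [coefb_unique α hbj _ hrepj (Finset.mem_insert_self _ _), if_pos rfl]
      exact div_neg_of_pos_of_neg (hposall j hj) hneg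
    · have hjsmem : js ∈ ρ0.erase j := Finset.mem_erase.mpr ⟨Ne.symm hjne, hjsρ0⟩
      have hjsk : js ≠ k := fun h => hkρ0 (h ▸ hjsρ0)
      refine ⟨js, Finset.mem_insert_of_mem hjsmem, ?_⟩
      rw [coefb_unique α hbj _ hrepj (Finset.mem_insert_of_mem hjsmem), if_neg hjsk]
      have hmin := hjsmin j (Finset.mem_filter.mpr ⟨hj, hposj⟩)
      have hne0 : coefb α hbj x0 js ≠ 0 :=
        coefb_x_ne_zero α hbj hx0cc hr (Finset.mem_insert_of_mem hjsmem)
      rw [coefb_unique α hbj _ hrepj (Finset.mem_insert_of_mem hjsmem), if_neg hjsk] at hne0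
      have h3 : coefb α hρ0 (α k) js * (coefb α hρ0 x0 js / coefb α hρ0 (α k) js)
          ≤ coefb α hρ0 (α k) js * (coefb α hρ0 x0 j / coefb α hρ0 (α k) j) :=
        mul_le_mul_of_nonneg_left hmin (le_of_lt hjspos)
      rw [hujsθ] at h3
      rcases lt_or_eq_of_le h3 with h4 | h4
      · linarith
      · exact absurd (sub_eq_zero_of_eq h4) hne0


lemma wc_step (hα : ∀ i, α i ≠ 0) (hr : 0 < r) (hτ : IsConeBasis α τ)
    (hx0cc : x0 ∈ chamberComplement α) (hx0c : x0 ∈ c) (hx0τ : InCone α τ x0)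
    (ρ0 : Finset (Fin n)) (hρ0 : IsConeBasis α ρ0) :
    Phi α ρ0 ∈ Submodule.span ℝ (wcSet α c τ) ∨
    ∃ ρ', IsConeBasis α ρ' ∧ nMeas α τ x0 ρ' < nMeas α τ x0 ρ0 ∧
      (Phi α ρ' ∈ Submodule.span ℝ (wcSet α c τ) →
        Phi α ρ0 ∈ Submodule.span ℝ (wcSet α c τ)) := by
  by_cases hne : ρ0 = τ
  · left
    rw [hne]
    exact Submodule.subset_span (Set.mem_union_left _ rfl)
  by_cases hposall : ∀ i ∈ ρ0, 0 < coefb α hρ0 x0 i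
  · obtain ⟨ρ', hAP, hf, himp⟩ :=
      wc_key α c τ x0 hα hr hτ hx0cc hx0c hx0τ hρ0 hne hposall
    exact Or.inr ⟨ρ', hAP.choose, nMeas_lt α τ x0 hAP hf, himp⟩
  · left
    push_neg at hposall
    obtain ⟨i, hi, hle⟩ := hposall
    exact junk_mem α c τ x0 hx0c hρ0
      ⟨i, hi, lt_of_le_of_ne hle (coefb_x_ne_zero α hρ0 hx0cc hr hi)⟩

lemma wc_all (hα : ∀ i, α i ≠ 0) (hr : 0 < r) (hτ : IsConeBasis α τ)
    (hx0cc : x0 ∈ chamberComplement α) (hx0c : x0 ∈ c) (hx0τ : InCone α τ x0) :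
    ∀ (N : ℕ) (ρ0 : Finset (Fin n)), nMeas α τ x0 ρ0 ≤ N → IsConeBasis α ρ0 →
      Phi α ρ0 ∈ Submodule.span ℝ (wcSet α c τ) := by
  intro N
  induction N with
  | zero =>
    intro ρ0 hN hρ0
    rcases wc_step α c τ x0 hα hr hτ hx0cc hx0c hx0τ ρ0 hρ0 with h | ⟨ρ', _, hlt, _⟩
    · exact h
    · omega
  | succ N ih =>
    intro ρ0 hN hρ0
    rcases wc_step α c τ x0 hα hr hτ hx0cc hx0c hx0τ ρ0 hρ0 with h | ⟨ρ', hb', hlt, himp⟩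
    · exact h
    · exact himp (ih ρ' (by omega) hb')

end WCMain

/-- **Wall-crossing decomposition.** Let `c` be a chamber of a polarized spanning list `𝔄`
and let `τ` index a basis from `𝔄` with `c ⊆ Cone(αⱼ : j ∈ τ)`. Then for every subset `ρ`
indexing a basis from `𝔄`, the fraction `Φ_ρ` lies in the span of `Φ_τ` and the fractions
`Φ_σ` over bases `σ` whose cone does not contain `c`. -/
theorem phi_mem_span_wall_crossing {r n : ℕ} (α : Fin n → Fin r → ℝ)
    (hα : ∀ i, α i ≠ 0) (hpol : Polarized α)
    (hspan : Submodule.span ℝ (Set.range α) = ⊤)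
    (c : Set (Fin r → ℝ)) (hc : IsChamber α c)
    (τ : Finset (Fin n)) (hτ : IsConeBasis α τ) (hcτ : c ⊆ coneSet α τ)
    (ρ : Finset (Fin n)) (hρ : IsConeBasis α ρ) :
    Phi α ρ ∈ Submodule.span ℝ
      ({Phi α τ} ∪
        {x | ∃ σ : Finset (Fin n), IsConeBasis α σ ∧ ¬ c ⊆ coneSet α σ ∧ x = Phi α σ}) := by
  rcases Nat.eq_zero_or_pos r with hr0 | hr
  · have hempty : IsEmpty (Fin n) := ⟨fun i => hα i (funext fun j => absurd j.2 (by omega))⟩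
    have hρτ : ρ = τ := by
      rw [Finset.eq_empty_of_isEmpty ρ, Finset.eq_empty_of_isEmpty τ]
    rw [hρτ]
    exact Submodule.subset_span (Set.mem_union_left _ rfl)
  · obtain ⟨x0, hx0cc, hceq⟩ := hc
    have hx0c : x0 ∈ c := by rw [hceq]; exact mem_connectedComponentIn hx0cc
    have hx0τ : InCone α τ x0 := hcτ hx0c
    exact wc_all α c τ x0 hα hr hτ hx0cc hx0c hx0τ (nMeas α τ x0 ρ) ρ le_rfl hρ
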